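/- Let Φ be a quantum channel with Cesàro projection 𝒫 and peripheral projection 𝒫_P. Then the support of 𝒫_P(𝕀) equals the support of 𝒫(𝕀), i.e. range 𝒫_P(𝕀) = range 𝒫(𝕀). -/

import Mathlib

open Matrix
open scoped ComplexOrder

/-- The algebra of `d × d` complex matrices. -/
abbrev Mat (d : ℕ) := Matrix (Fin d) (Fin d) ℂ

/-- A linear map on matrices is positive if it maps positive semidefinite matrices to
positive semidefinite matrices. -/
def IsPositiveMap {d : ℕ} (Φ : Module.End ℂ (Mat d)) : Prop :=
  ∀ X : Mat d, X.PosSemidef → (Φ X).PosSemidef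

/-- A linear map on matrices is trace-preserving. -/
def IsTracePreserving {d : ℕ} (Φ : Module.End ℂ (Mat d)) : Prop :=
  ∀ X : Mat d, (Φ X).trace = X.trace

/-- The block-wise application `(Φ ⊗ id_n)(X)` of `Φ` to a matrix on `ℂ^d ⊗ ℂ^n`. -/
def blockApply {d : ℕ} (Φ : Module.End ℂ (Mat d)) (n : ℕ)
    (X : Matrix (Fin d × Fin n) (Fin d × Fin n) ℂ) :
    Matrix (Fin d × Fin n) (Fin d × Fin n) ℂ :=
  Matrix.of fun p q => Φ (Matrix.of fun i j => X (i, p.2) (j, q.2)) p.1 q.1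

/-- Complete positivity: `Φ ⊗ id_n` is positive for every `n`. -/
def IsCompletelyPositive {d : ℕ} (Φ : Module.End ℂ (Mat d)) : Prop :=
  ∀ (n : ℕ) (X : Matrix (Fin d × Fin n) (Fin d × Fin n) ℂ),
    X.PosSemidef → (blockApply Φ n X).PosSemidef

/-- The attractor (peripheral) subspace: the span of eigenvectors corresponding to
eigenvalues of modulus one. -/
noncomputable def attrSubspace {d : ℕ} (Φ : Module.End ℂ (Mat d)) : Submodule ℂ (Mat d) :=
  ⨆ (μ : ℂ) (_ : ‖μ‖ = 1), Module.End.eigenspace Φ μ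

open Filter

namespace Scratch

variable {d : ℕ}

lemma endCont (T : Module.End ℂ (Mat d)) : Continuous T :=
  LinearMap.continuous_of_finiteDimensional T

lemma isClosed_nonneg : IsClosed {z : ℂ | 0 ≤ z} := by
  have h : {z : ℂ | 0 ≤ z} = {z : ℂ | 0 ≤ z.re} ∩ {z : ℂ | z.im = 0} := by
    ext z
    simp [Complex.le_def, eq_comm, and_comm]
  rw [h]
  exact (isClosed_le continuous_const Complex.continuous_re).inter
    (isClosed_eq Complex.continuous_im continuous_const)

lemma psd_of_tendsto {l : Filter ℕ} [l.NeBot] {f : ℕ → Mat d} {L : Mat d}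
    (h : Filter.Tendsto f l (nhds L)) (hf : ∀ n, (f n).PosSemidef) : L.PosSemidef := by
  refine Matrix.PosSemidef.of_dotProduct_mulVec_nonneg ?_ ?_
  · have h1 : Filter.Tendsto (fun n => (f n)ᴴ) l (nhds Lᴴ) :=
      ((continuous_id.matrix_conjTranspose).tendsto L).comp h
    have h2 : (fun n => (f n)ᴴ) = f := funext fun n => (hf n).1
    rw [h2] at h1
    exact tendsto_nhds_unique h1 h
  · intro x
    have hc : Continuous fun M : Mat d => star x ⬝ᵥ M *ᵥ x :=
      continuous_const.dotProduct (continuous_id.matrix_mulVec continuous_const)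
    have h3 : Filter.Tendsto (fun n => star x ⬝ᵥ (f n) *ᵥ x) l (nhds (star x ⬝ᵥ L *ᵥ x)) :=
      (hc.tendsto L).comp h
    exact isClosed_nonneg.mem_of_tendsto h3 (Filter.Eventually.of_forall fun n => (hf n).dotProduct_mulVec_nonneg x)

lemma quad_conj (M N : Mat d) (v : Fin d → ℂ) :
    star v ⬝ᵥ (Nᴴ * M * N) *ᵥ v = star (N *ᵥ v) ⬝ᵥ M *ᵥ (N *ᵥ v) := by
  rw [star_mulVec, ← mulVec_mulVec, ← mulVec_mulVec, dotProduct_mulVec]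

lemma biconj (M N K : Mat d) (v : Fin d → ℂ) :
    star (N *ᵥ v) ⬝ᵥ M *ᵥ (K *ᵥ v) = star v ⬝ᵥ (Nᴴ * M * K) *ᵥ v := by
  simp only [star_mulVec, dotProduct_mulVec, vecMul_vecMul, Matrix.mul_assoc]

lemma psd_smul {M : Mat d} (hM : M.PosSemidef) {r : ℝ} (hr : 0 ≤ r) :
    ((r : ℂ) • M).PosSemidef := by
  refine Matrix.PosSemidef.of_dotProduct_mulVec_nonneg ?_ ?_
  · unfold Matrix.IsHermitian
    rw [conjTranspose_smul, hM.1]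
    simp
  · intro x
    rw [smul_mulVec, dotProduct_smul]
    exact mul_nonneg (by exact_mod_cast Complex.real_le_real.mpr hr) (hM.dotProduct_mulVec_nonneg x)


variable {d : ℕ}

lemma trace_ctms (C : Mat d) :
    (Cᴴ * C).trace = ((∑ j, ∑ i, Complex.normSq (C i j) : ℝ) : ℂ) := by
  simp [Matrix.trace, Matrix.diag, Matrix.mul_apply, Matrix.conjTranspose_apply,
    ← Complex.normSq_eq_conj_mul_self]

lemma dot_star_self (u : Fin d → ℂ) :
    star u ⬝ᵥ u = ((∑ i, Complex.normSq (u i) : ℝ) : ℂ) := by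
  simp [dotProduct, ← Complex.normSq_eq_conj_mul_self]

lemma psd_trace_nonneg {M : Mat d} (hM : M.PosSemidef) : 0 ≤ M.trace := by
  obtain ⟨C, rfl⟩ : ∃ C : Mat d, M = Cᴴ * C := by
    open scoped MatrixOrder in exact CStarAlgebra.nonneg_iff_eq_star_mul_self.mp hM.nonneg
  rw [trace_ctms]
  rw [← Complex.ofReal_zero, Complex.real_le_real]
  apply Finset.sum_nonneg; intro j _; exact Finset.sum_nonneg fun i _ => Complex.normSq_nonneg _

lemma psd_trace_eq_zero {M : Mat d} (hM : M.PosSemidef) (h : M.trace = 0) : M = 0 := by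
  obtain ⟨C, rfl⟩ : ∃ C : Mat d, M = Cᴴ * C := by
    open scoped MatrixOrder in exact CStarAlgebra.nonneg_iff_eq_star_mul_self.mp hM.nonneg
  rw [trace_ctms] at h
  have h2 : (∑ j, ∑ i, Complex.normSq (C i j) : ℝ) = 0 := by exact_mod_cast h
  have hC : C = 0 := by
    ext i j
    have := (Finset.sum_eq_zero_iff_of_nonneg (fun j _ => Finset.sum_nonneg
      (fun i _ => Complex.normSq_nonneg _))).mp h2 j (Finset.mem_univ j)
    have := (Finset.sum_eq_zero_iff_of_nonneg (fun i _ => Complex.normSq_nonneg _)).mp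
      this i (Finset.mem_univ i)
    simpa using Complex.normSq_eq_zero.mp this
  rw [hC]; simp

lemma nonneg_eq_re {z : ℂ} (hz : 0 ≤ z) : z = (z.re : ℂ) := by
  have := (Complex.le_def.mp hz).2
  exact Complex.ext rfl (by simpa using this.symm)

lemma quad_le_trace {M : Mat d} (hM : M.PosSemidef) (w : Fin d → ℂ) :
    star w ⬝ᵥ M *ᵥ w ≤ M.trace * (star w ⬝ᵥ w) := by
  obtain ⟨C, rfl⟩ : ∃ C : Mat d, M = Cᴴ * C := by
    open scoped MatrixOrder in exact CStarAlgebra.nonneg_iff_eq_star_mul_self.mp hM.nonneg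
  have hL : star w ⬝ᵥ (Cᴴ * C) *ᵥ w = star (C *ᵥ w) ⬝ᵥ (C *ᵥ w) := by
    rw [star_mulVec, ← mulVec_mulVec, dotProduct_mulVec]
  rw [hL, trace_ctms, dot_star_self, dot_star_self, ← Complex.ofReal_mul,
    Complex.real_le_real]
  have key : ∀ i, Complex.normSq ((C *ᵥ w) i) ≤
      (∑ j, Complex.normSq (C i j)) * (∑ j, Complex.normSq (w j)) := by
    intro i
    have h1 : ‖(C *ᵥ w) i‖ ≤ ∑ j, ‖C i j‖ * ‖w j‖ := by
      calc ‖(C *ᵥ w) i‖ = ‖∑ j, C i j * w j‖ := by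
            simp [Matrix.mulVec, dotProduct]
        _ ≤ ∑ j, ‖C i j * w j‖ :=
            norm_sum_le Finset.univ (fun j => C i j * w j)
        _ = ∑ j, ‖C i j‖ * ‖w j‖ := by
            simp [norm_mul]
    have h2 : (∑ j, ‖C i j‖ * ‖w j‖) ^ 2 ≤
        (∑ j, ‖C i j‖ ^ 2) * (∑ j, ‖w j‖ ^ 2) :=
      Finset.sum_mul_sq_le_sq_mul_sq _ _ _
    have h3 : Complex.normSq ((C *ᵥ w) i) = ‖(C *ᵥ w) i‖ ^ 2 :=
      (Complex.sq_norm _).symm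
    calc Complex.normSq ((C *ᵥ w) i) = ‖(C *ᵥ w) i‖ ^ 2 := h3
      _ ≤ (∑ j, ‖C i j‖ * ‖w j‖) ^ 2 := by
          apply pow_le_pow_left₀ (norm_nonneg _) h1
      _ ≤ (∑ j, ‖C i j‖ ^ 2) * (∑ j, ‖w j‖ ^ 2) := h2
      _ = (∑ j, Complex.normSq (C i j)) * (∑ j, Complex.normSq (w j)) := by
          simp [Complex.sq_norm]
  calc (∑ i, Complex.normSq ((C *ᵥ w) i))
      ≤ ∑ i, (∑ j, Complex.normSq (C i j)) * (∑ j, Complex.normSq (w j)) :=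
        Finset.sum_le_sum (fun i _ => key i)
    _ = (∑ j, ∑ i, Complex.normSq (C i j)) * (∑ j, Complex.normSq (w j)) := by
        rw [← Finset.sum_mul, Finset.sum_comm]


variable {d : ℕ}

lemma pos_of_CP {Φ : Module.End ℂ (Mat d)} (hCP : IsCompletelyPositive Φ) :
    IsPositiveMap Φ := by
  intro X hX
  have h1 : ((X.submatrix (Prod.fst : Fin d × Fin 1 → Fin d) Prod.fst)).PosSemidef :=
    hX.submatrix _
  have h2 := hCP 1 _ h1
  have key : blockApply Φ 1 (X.submatrix Prod.fst Prod.fst) =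
      (Φ X).submatrix Prod.fst Prod.fst := by
    ext p q
    show Φ (Matrix.of fun i j => X i j) p.1 q.1 = (Φ X) p.1 q.1
    rfl
  rw [key] at h2
  have h3 := h2.submatrix (fun i : Fin d => ((i, 0) : Fin d × Fin 1))
  have h4 : ((Φ X).submatrix (Prod.fst : Fin d × Fin 1 → Fin d) Prod.fst).submatrix
      (fun i : Fin d => ((i, 0) : Fin d × Fin 1)) (fun i : Fin d => ((i, 0) : Fin d × Fin 1))
      = Φ X := by
    ext i j; rfl
  rwa [h4] at h3

lemma pos_pow {Φ : Module.End ℂ (Mat d)} (hΦ : IsPositiveMap Φ) (n : ℕ) :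
    IsPositiveMap (Φ ^ n) := by
  induction n with
  | zero => intro X hX; simpa using hX
  | succ n ih =>
      intro X hX
      rw [pow_succ]
      exact ih _ (hΦ _ hX)

-- PSD order helpers; "M ≤ N" encoded as (N - M).PosSemidef
lemma psd_sub_conj {M N : Mat d} (h : (N - M).PosSemidef) (Q : Mat d) :
    (Q * N * Qᴴ - Q * M * Qᴴ).PosSemidef := by
  have := h.mul_mul_conjTranspose_same Q
  have e : Q * (N - M) * Qᴴ = Q * N * Qᴴ - Q * M * Qᴴ := by
    rw [Matrix.mul_sub, Matrix.sub_mul]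
  rwa [e] at this

lemma psd_sub_trans {M N K : Mat d} (h1 : (N - M).PosSemidef) (h2 : (K - N).PosSemidef) :
    (K - M).PosSemidef := by
  have := h2.add h1
  rwa [sub_add_sub_cancel] at this

lemma psd_neg_eq_zero {M : Mat d} (h1 : M.PosSemidef) (h2 : (-M).PosSemidef) : M = 0 := by
  apply psd_trace_eq_zero h1
  have a1 := psd_trace_nonneg h1
  have a2 := psd_trace_nonneg h2
  rw [Matrix.trace_neg] at a2
  exact le_antisymm (neg_nonneg.mp a2) a1



variable {d : ℕ}

lemma exists_support_proj {B : Mat d} (hB : B.PosSemidef) :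
    ∃ Q : Mat d, Q.IsHermitian ∧ Q * Q = Q ∧ Q * B = 0 ∧
      (∀ v : Fin d → ℂ, B *ᵥ v = 0 → Q *ᵥ v = v) ∧
      ∃ c : ℝ, 0 ≤ c ∧ ((c : ℂ) • B - (1 - Q)).PosSemidef := by
  classical
  set U : Mat d := (hB.1.eigenvectorUnitary : Mat d) with hU
  set eig : Fin d → ℝ := hB.1.eigenvalues with heig
  have hUU : U * Uᴴ = 1 := by
    simpa [Matrix.star_eq_conjTranspose] using
      (Matrix.mem_unitaryGroup_iff.mp (hB.1.eigenvectorUnitary).2)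
  have hU'U : Uᴴ * U = 1 := by
    simpa [Matrix.star_eq_conjTranspose] using
      (Matrix.mem_unitaryGroup_iff'.mp (hB.1.eigenvectorUnitary).2)
  set Dmk : (Fin d → ℝ) → Mat d :=
    fun f => U * Matrix.diagonal (fun i => ((f i : ℝ) : ℂ)) * Uᴴ with hDmk
  have hmul : ∀ f g, Dmk f * Dmk g = Dmk (f * g) := by
    intro f g
    simp only [hDmk]
    calc U * diagonal (fun i => ((f i : ℝ):ℂ)) * Uᴴ * (U * diagonal (fun i => ((g i : ℝ):ℂ)) * Uᴴ)
        = U * diagonal (fun i => ((f i : ℝ):ℂ)) * (Uᴴ * U) * diagonal (fun i => ((g i : ℝ):ℂ)) * Uᴴ := by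
          simp only [Matrix.mul_assoc]
      _ = U * (diagonal (fun i => ((f i : ℝ):ℂ)) * diagonal (fun i => ((g i : ℝ):ℂ))) * Uᴴ := by
          rw [hU'U]; simp only [Matrix.mul_one, Matrix.mul_assoc]
      _ = U * diagonal (fun i => ((f i * g i : ℝ):ℂ)) * Uᴴ := by
          rw [Matrix.diagonal_mul_diagonal]
          congr 1
          congr 1
          funext i
          push_cast
          ring
  have hherm : ∀ f, (Dmk f).IsHermitian := by
    intro f
    unfold Matrix.IsHermitian
    simp only [hDmk, Matrix.conjTranspose_mul, Matrix.conjTranspose_conjTranspose,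
      Matrix.diagonal_conjTranspose]
    have : star (fun i => ((f i : ℝ) : ℂ)) = fun i => ((f i : ℝ) : ℂ) := by
      funext i; simp
    rw [this, Matrix.mul_assoc]
  have hpsd : ∀ f, (∀ i, 0 ≤ f i) → (Dmk f).PosSemidef := by
    intro f hf
    have : (Matrix.diagonal (fun i => ((f i : ℝ) : ℂ))).PosSemidef := by
      refine Matrix.posSemidef_diagonal_iff.mpr fun i => ?_
      rw [← Complex.ofReal_zero, Complex.real_le_real]; exact hf i
    exact this.mul_mul_conjTranspose_same U
  have hBeq : B = Dmk eig := hB.1.spectral_theorem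
  have hone : Dmk (fun _ => 1) = 1 := by
    simp only [hDmk, Complex.ofReal_one, Matrix.diagonal_one, Matrix.mul_one, hUU]
  have hsmul : ∀ (r : ℝ) f, (r : ℂ) • Dmk f = Dmk (r • f) := by
    intro r f
    have hcast : (fun i => (((r • f) i : ℝ) : ℂ)) = (r:ℂ) • (fun i => ((f i:ℝ):ℂ)) := by
      funext i; simp only [Pi.smul_apply, smul_eq_mul]; push_cast; ring
    show (r:ℂ) • (U * diagonal (fun i => ((f i:ℝ):ℂ)) * Uᴴ)
        = U * diagonal (fun i => (((r • f) i :ℝ):ℂ)) * Uᴴ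
    rw [hcast, Matrix.diagonal_smul, ← Matrix.smul_mul, ← Matrix.mul_smul]
  have hsub : ∀ f g, Dmk f - Dmk g = Dmk (f - g) := by
    intro f g
    simp only [hDmk, ← Matrix.sub_mul, ← Matrix.mul_sub, Matrix.diagonal_sub]
    congr 2
    funext i
    push_cast
    simp
  set q : Fin d → ℝ := fun i => if eig i = 0 then 1 else 0 with hq
  refine ⟨Dmk q, hherm q, ?_, ?_, ?_, ?_⟩
  · rw [hmul]
    have : q * q = q := by
      funext i; simp only [hq, Pi.mul_apply]
      by_cases h : eig i = 0 <;> simp [h]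
    rw [this]
  · rw [hBeq, hmul]
    have h0 : q * eig = 0 := by
      funext i; simp only [hq, Pi.mul_apply, Pi.zero_apply]
      by_cases h : eig i = 0 <;> simp [h]
    rw [h0]
    simp only [hDmk, Complex.ofReal_zero]
    change U * Matrix.diagonal (fun _ => (0:ℂ)) * Uᴴ = 0
    rw [Matrix.diagonal_zero]
    simp
  · -- kernel property
    intro v hv
    have hw : Matrix.diagonal (fun i => ((eig i : ℝ):ℂ)) *ᵥ (Uᴴ *ᵥ v) = 0 := by
      have h1 : Uᴴ *ᵥ (B *ᵥ v) = 0 := by rw [hv, Matrix.mulVec_zero]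
      rw [hBeq] at h1
      simp only [hDmk] at h1
      rw [Matrix.mulVec_mulVec, ← Matrix.mul_assoc, ← Matrix.mul_assoc, hU'U,
        Matrix.one_mul, ← Matrix.mulVec_mulVec] at h1
      exact h1
    have hwi : ∀ i, eig i ≠ 0 → (Uᴴ *ᵥ v) i = 0 := by
      intro i hi
      have := congrFun hw i
      rw [Matrix.mulVec_diagonal] at this
      simpa [hi] using this
    have hfix : Matrix.diagonal (fun i => ((q i : ℝ):ℂ)) *ᵥ (Uᴴ *ᵥ v) = Uᴴ *ᵥ v := by
      funext i
      rw [Matrix.mulVec_diagonal]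
      by_cases h : eig i = 0
      · simp [hq, h]
      · simp [hq, h, hwi i h]
    calc Dmk q *ᵥ v = U *ᵥ (Matrix.diagonal (fun i => ((q i : ℝ):ℂ)) *ᵥ (Uᴴ *ᵥ v)) := by
          simp only [hDmk, Matrix.mulVec_mulVec, Matrix.mul_assoc]
      _ = U *ᵥ (Uᴴ *ᵥ v) := by rw [hfix]
      _ = v := by rw [Matrix.mulVec_mulVec, hUU, Matrix.one_mulVec]
  · -- the constant c
    have heignn : ∀ i, 0 ≤ eig i := hB.eigenvalues_nonneg
    set S : Finset (Fin d) := Finset.univ.filter (fun i => eig i ≠ 0) with hS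
    by_cases hne : S.Nonempty
    · set lam : ℝ := S.inf' hne eig with hlam
      have hlam_pos : 0 < lam := by
        rw [hlam, Finset.lt_inf'_iff]
        intro i hi
        rw [hS, Finset.mem_filter] at hi
        exact lt_of_le_of_ne (heignn i) (Ne.symm hi.2)
      refine ⟨lam⁻¹, le_of_lt (inv_pos.mpr hlam_pos), ?_⟩
      have key : ((lam⁻¹ : ℝ) : ℂ) • B - (1 - Dmk q) =
          Dmk (fun i => lam⁻¹ • eig i - ((fun _ => (1:ℝ)) i - q i)) := by
        rw [hBeq, hsmul, ← hone, hsub, hsub]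
        rfl
      rw [key]
      apply hpsd
      intro i
      by_cases h : eig i = 0
      · simp [hq, h]
      · have h1 : lam ≤ eig i := by
          apply Finset.inf'_le
          rw [hS, Finset.mem_filter]
          exact ⟨Finset.mem_univ i, h⟩
        have : (1:ℝ) ≤ lam⁻¹ • eig i := by
          rw [smul_eq_mul]
          rw [← div_eq_inv_mul]
          rw [le_div_iff₀ hlam_pos]
          linarith
        simp only [hq, h, if_neg h]
        simp only [smul_eq_mul] at this ⊢
        linarith
    · refine ⟨0, le_refl 0, ?_⟩
      have hq1 : q = fun _ => (1:ℝ) := by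
        funext i
        have : eig i = 0 := by
          by_contra h
          exact hne ⟨i, by rw [hS, Finset.mem_filter]; exact ⟨Finset.mem_univ i, h⟩⟩
        simp [hq, this]
      rw [hq1, hone]
      simp only [Complex.ofReal_zero, zero_smul, sub_self, sub_zero]
      exact Matrix.PosSemidef.zero

variable {d : ℕ}



lemma fixed_of_cesaro {Φ : Module.End ℂ (Mat d)} {X B : Mat d}
    (hlim : Filter.Tendsto (fun N : ℕ => (N : ℂ)⁻¹ • (∑ n ∈ Finset.Icc 1 N, Φ ^ n) X)
      Filter.atTop (nhds B)) : Φ B = B := by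
  set s : ℕ → Mat d := fun N => (N : ℂ)⁻¹ • ∑ n ∈ Finset.Icc 1 N, (Φ ^ n) X with hs_def
  have hs : Filter.Tendsto s atTop (nhds B) := by
    convert hlim using 2 with N
    simp [hs_def, LinearMap.sum_apply]
  -- identity for N ≥ 1
  have hid : ∀ N : ℕ, 1 ≤ N → Φ (s N) =
      ((N : ℂ)⁻¹ * ((N + 1 : ℕ) : ℂ)) • s (N + 1) - (N : ℂ)⁻¹ • (Φ X) := by
    intro N hN
    have h1 : Φ (s N) = (N : ℂ)⁻¹ • ∑ n ∈ Finset.Icc 1 N, (Φ ^ (n + 1)) X := by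
      rw [hs_def]
      simp only [_root_.map_smul, map_sum]
      congr 1
      refine Finset.sum_congr rfl fun n _ => ?_
      rw [pow_succ']
      rfl
    have h2 : ∑ n ∈ Finset.Icc 1 N, (Φ ^ (n + 1)) X = ∑ n ∈ Finset.Icc 2 (N + 1), (Φ ^ n) X := by
      rw [← Finset.map_add_right_Icc 1 N 1]
      rw [Finset.sum_map]
      rfl
    have hIcc : Finset.Icc 2 (N + 1) = Finset.Ioc 1 (N + 1) := by
      have := Finset.Icc_add_one_left_eq_Ioc 1 (N + 1)
      simpa using this
    have h3 : ∑ n ∈ Finset.Icc 1 (N + 1), (Φ ^ n) X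
        = (Φ ^ 1) X + ∑ n ∈ Finset.Icc 2 (N + 1), (Φ ^ n) X := by
      rw [hIcc, ← Finset.sum_Ioc_add_eq_sum_Icc (by omega : 1 ≤ N + 1)]
      abel
    have h4 : ∑ n ∈ Finset.Icc 2 (N + 1), (Φ ^ n) X
        = ((N + 1 : ℕ) : ℂ) • s (N + 1) - Φ X := by
      have hNnz : ((N + 1 : ℕ) : ℂ) ≠ 0 := Nat.cast_ne_zero.mpr (Nat.succ_ne_zero N)
      have : ((N + 1 : ℕ) : ℂ) • s (N + 1) = ∑ n ∈ Finset.Icc 1 (N + 1), (Φ ^ n) X := by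
        rw [hs_def]
        rw [smul_smul, mul_inv_cancel₀ hNnz, one_smul]
      rw [this, h3, pow_one]
      abel
    rw [h1, h2, h4, smul_sub, smul_smul]
  have hid' : ∀ᶠ N in atTop, Φ (s N) =
      ((N : ℂ)⁻¹ * ((N + 1 : ℕ) : ℂ)) • s (N + 1) - (N : ℂ)⁻¹ • (Φ X) :=
    eventually_atTop.mpr ⟨1, hid⟩
  have hrhs : Filter.Tendsto
      (fun N : ℕ => ((N : ℂ)⁻¹ * ((N + 1 : ℕ) : ℂ)) • s (N + 1) - (N : ℂ)⁻¹ • (Φ X))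
      atTop (nhds B) := by
    have hinv : Filter.Tendsto (fun N : ℕ => (N : ℂ)⁻¹) atTop (nhds 0) :=
      tendsto_inv_atTop_nhds_zero_nat (𝕜 := ℂ)
    have hcoef : Filter.Tendsto (fun N : ℕ => (N : ℂ)⁻¹ * ((N + 1 : ℕ) : ℂ)) atTop (nhds 1) := by
      have he : ∀ᶠ N : ℕ in atTop, (N : ℂ)⁻¹ * ((N + 1 : ℕ) : ℂ) = 1 + (N : ℂ)⁻¹ := by
        refine eventually_atTop.mpr ⟨1, fun N hN => ?_⟩
        have hNnz : (N : ℂ) ≠ 0 := Nat.cast_ne_zero.mpr (by omega)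
        push_cast
        rw [mul_add, mul_one, inv_mul_cancel₀ hNnz, add_comm]
      rw [Filter.tendsto_congr' he]
      simpa using tendsto_const_nhds.add hinv
    have h5 : Filter.Tendsto (fun N : ℕ => s (N + 1)) atTop (nhds B) :=
      hs.comp (tendsto_add_atTop_nat 1)
    have h6 := hcoef.smul h5
    rw [one_smul] at h6
    have h7 : Filter.Tendsto (fun N : ℕ => (N : ℂ)⁻¹ • (Φ X)) atTop (nhds 0) := by
      simpa using hinv.smul_const (Φ X)
    simpa using h6.sub h7
  have hlhs : Filter.Tendsto (fun N => Φ (s N)) atTop (nhds (Φ B)) :=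
    ((endCont Φ).tendsto B).comp hs
  exact tendsto_nhds_unique (hlhs.congr' hid') hrhs



lemma mat_eq_zero_of_forall_mulVec {M : Mat d} (h : ∀ v, M *ᵥ v = 0) : M = 0 := by
  ext i j
  have := congrFun (h (Pi.single j 1)) i
  rw [Matrix.mulVec_single] at this
  simpa using this

lemma herm_smul_real (r : ℝ) {M : Mat d} (hM : M.IsHermitian) :
    ((r : ℂ) • M).IsHermitian := by
  unfold Matrix.IsHermitian
  rw [Matrix.conjTranspose_smul, hM.eq]
  congr 1
  simp

lemma herm_conj {M : Mat d} (hM : M.IsHermitian) (N : Mat d) (hN : N.IsHermitian) :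
    (N * M * N).IsHermitian := by
  unfold Matrix.IsHermitian
  rw [Matrix.conjTranspose_mul, Matrix.conjTranspose_mul, hM.eq, hN.eq, Matrix.mul_assoc]

lemma trace_re_nonneg {M : Mat d} (hM : M.PosSemidef) : 0 ≤ M.trace.re :=
  (Complex.le_def.mp (psd_trace_nonneg hM)).1

lemma trace_re_mono {M N : Mat d} (h : (N - M).PosSemidef) : M.trace.re ≤ N.trace.re := by
  have := trace_re_nonneg h
  rw [Matrix.trace_sub, Complex.sub_re] at this
  linarith

/-- `tr(QMQ) ≤ tr M` for `M` PSD and `Q` a Hermitian idempotent. -/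
lemma trace_conj_le {M Q : Mat d} (hM : M.PosSemidef) (hQ : Q.IsHermitian) (hQQ : Q * Q = Q) :
    (Q * M * Q).trace.re ≤ M.trace.re := by
  have h1q : (1 - Q) * (1 - Q) = 1 - Q := by
    rw [Matrix.mul_sub, Matrix.sub_mul, Matrix.sub_mul, hQQ]
    simp only [Matrix.one_mul, Matrix.mul_one]
    abel
  have hsplit : M.trace = (Q * M * Q).trace + ((1 - Q) * M * (1 - Q)).trace := by
    have t1 : (Q * M * Q).trace = (Q * M).trace := by
      rw [Matrix.trace_mul_cycle, hQQ]
    have t2 : ((1 - Q) * M * (1 - Q)).trace = ((1 - Q) * M).trace := by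
      rw [Matrix.trace_mul_cycle, h1q]
    rw [t1, t2, ← Matrix.trace_add, ← Matrix.add_mul]
    have : Q + (1 - Q) = (1 : Mat d) := by abel
    rw [this, Matrix.one_mul]
  have hpos : 0 ≤ ((1 - Q) * M * (1 - Q)).trace.re := by
    apply trace_re_nonneg
    have h1q : (1 - Q).IsHermitian := by
      unfold Matrix.IsHermitian
      rw [Matrix.conjTranspose_sub, Matrix.conjTranspose_one, hQ.eq]
    have := hM.mul_mul_conjTranspose_same (1 - Q)
    rwa [h1q.eq] at this
  have := congrArg Complex.re hsplit
  rw [Complex.add_re] at this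
  linarith

/-- Compression bound: `Pr X Pr ≤ tr(X) • Pr` for `X` PSD, `Pr` a Hermitian idempotent. -/
lemma psd_compress {X Pr : Mat d} (hX : X.PosSemidef) (hPr : Pr.IsHermitian)
    (hPrPr : Pr * Pr = Pr) :
    (((X.trace.re : ℝ) : ℂ) • Pr - Pr * X * Pr).PosSemidef := by
  have htr : X.trace = ((X.trace.re : ℝ) : ℂ) := nonneg_eq_re (psd_trace_nonneg hX)
  refine Matrix.PosSemidef.of_dotProduct_mulVec_nonneg ?_ ?_
  · have h1 := herm_smul_real X.trace.re hPr
    have h2 := herm_conj hX.1 Pr hPr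
    exact h1.sub h2
  · intro v
    rw [Matrix.sub_mulVec, dotProduct_sub, Matrix.smul_mulVec, dotProduct_smul]
    rw [sub_nonneg]
    have e1 : star v ⬝ᵥ (Pr * X * Pr) *ᵥ v = star (Pr *ᵥ v) ⬝ᵥ X *ᵥ (Pr *ᵥ v) := by
      rw [← quad_conj X Pr v, hPr.eq]
    have e2 : star (Pr *ᵥ v) ⬝ᵥ (Pr *ᵥ v) = star v ⬝ᵥ Pr *ᵥ v := by
      have h0 := biconj 1 Pr Pr v
      rw [Matrix.mul_one, hPr.eq, hPrPr, Matrix.one_mulVec] at h0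
      exact h0
    calc star v ⬝ᵥ (Pr * X * Pr) *ᵥ v = star (Pr *ᵥ v) ⬝ᵥ X *ᵥ (Pr *ᵥ v) := e1
      _ ≤ X.trace * (star (Pr *ᵥ v) ⬝ᵥ (Pr *ᵥ v)) := quad_le_trace hX _
      _ = ((X.trace.re : ℝ) : ℂ) • (star v ⬝ᵥ Pr *ᵥ v) := by
          rw [e2, ← htr, smul_eq_mul]

/-- `B ≤ tr(B) • 1` for PSD `B`. -/
lemma psd_le_trace_one {X : Mat d} (hX : X.PosSemidef) :
    (((X.trace.re : ℝ) : ℂ) • (1 : Mat d) - X).PosSemidef := by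
  have := psd_compress hX Matrix.isHermitian_one (by rw [Matrix.one_mul])
  rwa [Matrix.one_mul, Matrix.mul_one] at this

/-- The epsilon-inequality: `ε X ≤ (ε + ε²) Pr X Pr + (1 + ε) Q X Q` when `Pr + Q = 1`. -/
lemma eps_ineq {X Pr Q : Mat d} (hX : X.PosSemidef) (hPr : Pr.IsHermitian)
    (hQ : Q.IsHermitian) (hPrQ : Pr + Q = 1) (e : ℝ) :
    (((e + e ^ 2 : ℝ) : ℂ) • (Pr * X * Pr) + ((1 + e : ℝ) : ℂ) • (Q * X * Q)
      - ((e : ℝ) : ℂ) • X).PosSemidef := by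
  refine Matrix.PosSemidef.of_dotProduct_mulVec_nonneg ?_ ?_
  · have h1 := herm_smul_real (e + e ^ 2) (herm_conj hX.1 Pr hPr)
    have h2 := herm_smul_real (1 + e) (herm_conj hX.1 Q hQ)
    have h3 := herm_smul_real e hX.1
    exact (h1.add h2).sub h3
  · intro v
    have hXdec : X = Pr * X * Pr + Pr * X * Q + Q * X * Pr + Q * X * Q := by
      have h0 : (Pr + Q) * X * (Pr + Q) = X := by rw [hPrQ, Matrix.one_mul, Matrix.mul_one]
      calc X = (Pr + Q) * X * (Pr + Q) := h0.symm
        _ = _ := by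
            simp only [Matrix.add_mul, Matrix.mul_add]
            abel
    set a := star v ⬝ᵥ (Pr * X * Pr) *ᵥ v with ha
    set b := star v ⬝ᵥ (Q * X * Q) *ᵥ v with hb
    set c1 := star v ⬝ᵥ (Pr * X * Q) *ᵥ v with hc1
    set c2 := star v ⬝ᵥ (Q * X * Pr) *ᵥ v with hc2
    have hX_v : star v ⬝ᵥ X *ᵥ v = a + c1 + c2 + b := by
      conv_lhs => rw [hXdec]
      rw [Matrix.add_mulVec, Matrix.add_mulVec, Matrix.add_mulVec, dotProduct_add,
        dotProduct_add, dotProduct_add]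
    have hLHS : star v ⬝ᵥ ((((e + e ^ 2 : ℝ) : ℂ) • (Pr * X * Pr)
        + ((1 + e : ℝ) : ℂ) • (Q * X * Q) - ((e : ℝ) : ℂ) • X)) *ᵥ v
        = ((e + e ^ 2 : ℝ) : ℂ) * a + ((1 + e : ℝ) : ℂ) * b
          - ((e : ℝ) : ℂ) * (a + c1 + c2 + b) := by
      rw [Matrix.sub_mulVec, Matrix.add_mulVec, Matrix.smul_mulVec,
        Matrix.smul_mulVec, Matrix.smul_mulVec, dotProduct_sub, dotProduct_add,
        dotProduct_smul, dotProduct_smul, dotProduct_smul, smul_eq_mul, smul_eq_mul,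
        smul_eq_mul, hX_v]
    have hbi1 : star (Pr *ᵥ v) ⬝ᵥ X *ᵥ (Pr *ᵥ v) = a := by rw [biconj, hPr.eq]
    have hbi2 : star (Pr *ᵥ v) ⬝ᵥ X *ᵥ (Q *ᵥ v) = c1 := by rw [biconj, hPr.eq]
    have hbi3 : star (Q *ᵥ v) ⬝ᵥ X *ᵥ (Pr *ᵥ v) = c2 := by rw [biconj, hQ.eq]
    have hbi4 : star (Q *ᵥ v) ⬝ᵥ X *ᵥ (Q *ᵥ v) = b := by rw [biconj, hQ.eq]
    have hRHS : star (((e : ℝ) : ℂ) • (Pr *ᵥ v) - Q *ᵥ v) ⬝ᵥ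
        X *ᵥ (((e : ℝ) : ℂ) • (Pr *ᵥ v) - Q *ᵥ v)
        = ((e : ℝ) : ℂ) * ((e : ℝ) : ℂ) * a - ((e : ℝ) : ℂ) * c1
          - ((e : ℝ) : ℂ) * c2 + b := by
      have hstar : star (((e : ℝ) : ℂ) • (Pr *ᵥ v) - Q *ᵥ v)
          = ((e : ℝ) : ℂ) • star (Pr *ᵥ v) - star (Q *ᵥ v) := by
        rw [star_sub, star_smul]
        congr 1
        simp
      rw [hstar, Matrix.mulVec_sub, Matrix.mulVec_smul, sub_dotProduct, smul_dotProduct,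
        dotProduct_sub, dotProduct_sub, dotProduct_smul, dotProduct_smul, hbi1, hbi2, hbi3,
        hbi4, smul_eq_mul, smul_eq_mul, smul_eq_mul]
      ring
    have hval := hX.dotProduct_mulVec_nonneg (((e : ℝ) : ℂ) • (Pr *ᵥ v) - Q *ᵥ v)
    rw [hRHS] at hval
    rw [hLHS]
    have heq : ((e + e ^ 2 : ℝ) : ℂ) * a + ((1 + e : ℝ) : ℂ) * b
        - ((e : ℝ) : ℂ) * (a + c1 + c2 + b)
        = ((e : ℝ) : ℂ) * ((e : ℝ) : ℂ) * a - ((e : ℝ) : ℂ) * c1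
          - ((e : ℝ) : ℂ) * c2 + b := by
      push_cast
      ring
    rw [heq]
    exact hval


lemma range_eq_ker_proj {M Q : Mat d} (hQM : Q * M = 0) (hMQ : M * Q = 0)
    (hker : ∀ v, M *ᵥ v = 0 → Q *ᵥ v = v) :
    LinearMap.range M.mulVecLin = LinearMap.ker Q.mulVecLin := by
  have hle : LinearMap.range M.mulVecLin ≤ LinearMap.ker Q.mulVecLin := by
    rintro x ⟨u, rfl⟩
    rw [LinearMap.mem_ker, Matrix.mulVecLin_apply, Matrix.mulVecLin_apply,
      Matrix.mulVec_mulVec, hQM, Matrix.zero_mulVec]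
  have hkr : LinearMap.ker M.mulVecLin = LinearMap.range Q.mulVecLin := by
    ext v
    rw [LinearMap.mem_ker, Matrix.mulVecLin_apply]
    constructor
    · intro hv
      exact ⟨v, hker v hv⟩
    · rintro ⟨u, rfl⟩
      rw [Matrix.mulVecLin_apply, Matrix.mulVec_mulVec, hMQ, Matrix.zero_mulVec]
  have h1 := LinearMap.finrank_range_add_finrank_ker M.mulVecLin
  have h2 := LinearMap.finrank_range_add_finrank_ker Q.mulVecLin
  rw [hkr] at h1
  have hcard : Module.finrank ℂ (Fin d → ℂ) = d := by
    rw [Module.finrank_fintype_fun_eq_card, Fintype.card_fin]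
  rw [hcard] at h1 h2
  exact Submodule.eq_of_le_of_finrank_eq hle (by omega)

end Scratch

/-- For a quantum channel `Φ` with Cesàro projection `P` and peripheral
projection `P_P`, the supports coincide: `range P_P(𝕀) = range P(𝕀)`. -/
theorem support_peripheral_eq_support_cesaro
    (d : ℕ) (Φ P Pp : Module.End ℂ (Mat d))
    (hCP : IsCompletelyPositive Φ) (hTP : IsTracePreserving Φ)
    (hlim : ∀ X : Mat d,
      Filter.Tendsto (fun N : ℕ => (N : ℂ)⁻¹ • (∑ n ∈ Finset.Icc 1 N, Φ ^ n) X)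
        Filter.atTop (nhds (P X)))
    (nn : ℕ → ℕ) (hmono : StrictMono nn)
    (hlimP : ∀ X : Mat d,
      Filter.Tendsto (fun i : ℕ => (Φ ^ nn i) X) Filter.atTop (nhds (Pp X))) :
    LinearMap.range (Matrix.mulVecLin (Pp (1 : Mat d))) =
      LinearMap.range (Matrix.mulVecLin (P (1 : Mat d))) := by
  classical
  have hPos : IsPositiveMap Φ := Scratch.pos_of_CP hCP
  set A : Mat d := Pp 1 with hAdef
  set B : Mat d := P 1 with hBdef
  have hXn : ∀ n : ℕ, ((Φ ^ n) (1 : Mat d)).PosSemidef := fun n =>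
    Scratch.pos_pow hPos n 1 Matrix.PosSemidef.one
  have hApsd : A.PosSemidef := Scratch.psd_of_tendsto (hlimP 1) fun i => hXn (nn i)
  set s : ℕ → Mat d := fun N => (N : ℂ)⁻¹ • ∑ n ∈ Finset.Icc 1 N, (Φ ^ n) (1 : Mat d) with hsdef
  have hs : Filter.Tendsto s Filter.atTop (nhds B) := by
    convert hlim 1 using 2 with N
    simp [hsdef, LinearMap.sum_apply]
  have hsPSD : ∀ N, (s N).PosSemidef := by
    intro N
    have hsum : (∑ n ∈ Finset.Icc 1 N, (Φ ^ n) (1 : Mat d)).PosSemidef :=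
      Finset.sum_induction _ _ (fun a b ha hb => ha.add hb) Matrix.PosSemidef.zero
        fun n _ => hXn n
    have h2 : ((((N : ℝ)⁻¹ : ℝ) : ℂ) • ∑ n ∈ Finset.Icc 1 N, (Φ ^ n) (1 : Mat d)).PosSemidef :=
      Scratch.psd_smul hsum (by positivity)
    have hcast : ((((N : ℝ)⁻¹ : ℝ) : ℂ)) = ((N : ℂ))⁻¹ := by push_cast; ring
    rw [hcast] at h2
    exact h2
  have hBpsd : B.PosSemidef := Scratch.psd_of_tendsto hs hsPSD
  have hΦB : Φ B = B := Scratch.fixed_of_cesaro (hlim 1)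
  have hΦpowB : ∀ k : ℕ, (Φ ^ k) B = B := by
    intro k
    induction k with
    | zero => simp
    | succ k ih =>
        rw [pow_succ']
        show Φ ((Φ ^ k) B) = B
        rw [ih, hΦB]
  obtain ⟨Q, hQh, hQQ, hQB, hker, c₀, hc₀, hPrB⟩ := Scratch.exists_support_proj hBpsd
  set Pr : Mat d := 1 - Q with hPrdef
  have hPrh : Pr.IsHermitian := by
    unfold Matrix.IsHermitian
    rw [hPrdef, Matrix.conjTranspose_sub, Matrix.conjTranspose_one, hQh.eq]
  have hPrPr : Pr * Pr = Pr := by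
    rw [hPrdef, Matrix.mul_sub, Matrix.sub_mul, Matrix.sub_mul, hQQ]
    simp only [Matrix.one_mul, Matrix.mul_one]
    abel
  have hPrQ1 : Pr + Q = 1 := by rw [hPrdef]; abel
  have hBQ : B * Q = 0 := by
    have h0 : (Q * B)ᴴ = Bᴴ * Qᴴ := Matrix.conjTranspose_mul Q B
    rw [hQB, hBpsd.1.eq, hQh.eq] at h0
    rw [← h0, Matrix.conjTranspose_zero]
  -- key one-step monotonicity of the trace on the kernel block
  have key_step : ∀ X : Mat d, X.PosSemidef →
      (Q * Φ X * Q).trace.re ≤ (Q * X * Q).trace.re := by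
    intro X hXpsd
    have hPrXPr : (Pr * X * Pr).PosSemidef := by
      have h0 := hXpsd.mul_mul_conjTranspose_same Pr
      rwa [hPrh.eq] at h0
    have hQXQpsd : (Q * X * Q).PosSemidef := by
      have h0 := hXpsd.mul_mul_conjTranspose_same Q
      rwa [hQh.eq] at h0
    set t : ℝ := X.trace.re with htdef
    have ht0 : 0 ≤ t := Scratch.trace_re_nonneg hXpsd
    have h1 : (((t : ℝ) : ℂ) • Pr - Pr * X * Pr).PosSemidef :=
      Scratch.psd_compress hXpsd hPrh hPrPr
    have h2 : (((t * c₀ : ℝ) : ℂ) • B - ((t : ℝ) : ℂ) • Pr).PosSemidef := by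
      have h0 := Scratch.psd_smul hPrB ht0
      have e0 : (t : ℂ) • ((c₀ : ℂ) • B - (1 - Q)) =
          ((t * c₀ : ℝ) : ℂ) • B - ((t : ℝ) : ℂ) • Pr := by
        rw [smul_sub, smul_smul, hPrdef]
        push_cast
        ring_nf
      rwa [e0] at h0
    have h3 : (((t * c₀ : ℝ) : ℂ) • B - Pr * X * Pr).PosSemidef :=
      Scratch.psd_sub_trans h1 h2
    have h4 : (((t * c₀ : ℝ) : ℂ) • B - Φ (Pr * X * Pr)).PosSemidef := by
      have h0 := hPos _ h3
      rwa [map_sub, _root_.map_smul, hΦB] at h0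
    have h5 := Scratch.psd_sub_conj h4 Q
    have e0 : Q * (((t * c₀ : ℝ) : ℂ) • B) * Qᴴ = 0 := by
      rw [Matrix.mul_smul, Matrix.smul_mul, hQB, Matrix.zero_mul, smul_zero]
    rw [e0, zero_sub] at h5
    have hzero : Q * Φ (Pr * X * Pr) * Q = 0 := by
      have hpsdQ := (hPos _ hPrXPr).mul_mul_conjTranspose_same Q
      have h0 := Scratch.psd_neg_eq_zero hpsdQ h5
      rwa [hQh.eq] at h0
    have heps : ∀ e : ℝ, 0 < e →
        e * (Q * Φ X * Q).trace.re ≤ (1 + e) * (Q * X * Q).trace.re := by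
      intro e he
      have hI := Scratch.eps_ineq hXpsd hPrh hQh hPrQ1 e
      have hIΦ : (((e + e ^ 2 : ℝ) : ℂ) • Φ (Pr * X * Pr) + ((1 + e : ℝ) : ℂ) • Φ (Q * X * Q)
          - ((e : ℝ) : ℂ) • Φ X).PosSemidef := by
        have h0 := hPos _ hI
        rwa [map_sub, map_add, _root_.map_smul, _root_.map_smul, _root_.map_smul] at h0
      have h6 := Scratch.psd_sub_conj hIΦ Q
      have e1 : Q * (((e + e ^ 2 : ℝ) : ℂ) • Φ (Pr * X * Pr)
            + ((1 + e : ℝ) : ℂ) • Φ (Q * X * Q)) * Qᴴ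
          = ((1 + e : ℝ) : ℂ) • (Q * Φ (Q * X * Q) * Q) := by
        rw [Matrix.mul_add, Matrix.add_mul, Matrix.mul_smul, Matrix.smul_mul, Matrix.mul_smul,
          Matrix.smul_mul, hQh.eq, hzero, smul_zero, zero_add]
      have e2 : Q * (((e : ℝ) : ℂ) • Φ X) * Qᴴ = ((e : ℝ) : ℂ) • (Q * Φ X * Q) := by
        rw [Matrix.mul_smul, Matrix.smul_mul, hQh.eq]
      rw [e1, e2] at h6
      have h7 := Scratch.trace_re_mono h6
      rw [Matrix.trace_smul, Matrix.trace_smul, smul_eq_mul, smul_eq_mul,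
        Complex.re_ofReal_mul, Complex.re_ofReal_mul] at h7
      have h8 : (Q * Φ (Q * X * Q) * Q).trace.re ≤ (Φ (Q * X * Q)).trace.re :=
        Scratch.trace_conj_le (hPos _ hQXQpsd) hQh hQQ
      have h9 : (Φ (Q * X * Q)).trace.re = (Q * X * Q).trace.re := by
        rw [hTP]
      have h10 : (1 + e) * (Q * Φ (Q * X * Q) * Q).trace.re
          ≤ (1 + e) * (Q * X * Q).trace.re := by
        apply mul_le_mul_of_nonneg_left _ (by linarith)
        rw [← h9]
        exact h8
      linarith
    by_contra hcon
    push_neg at hcon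
    set a : ℝ := (Q * Φ X * Q).trace.re with hadef
    set b : ℝ := (Q * X * Q).trace.re with hbdef
    have hb0 : 0 ≤ b := Scratch.trace_re_nonneg hQXQpsd
    have hablt : b < a := hcon
    have he : 0 < (b + 1) / (a - b) := div_pos (by linarith) (by linarith)
    have h10 := heps _ he
    rw [div_mul_eq_mul_div, div_le_iff₀ (by linarith : (0:ℝ) < a - b)] at h10
    have h11 : (1 + (b + 1) / (a - b)) * b * (a - b)
        = b * (a - b) + (b + 1) * b := by
      have hne : a - b ≠ 0 := by linarith
      field_simp
    rw [h11] at h10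
    nlinarith
  -- the decreasing sequence t n = tr(Q Φ^n(1) Q).re
  set tq : ℕ → ℝ := fun n => (Q * ((Φ ^ n) (1 : Mat d)) * Q).trace.re with htqdef
  have hQpow : ∀ n, (Q * ((Φ ^ n) (1 : Mat d)) * Q).PosSemidef := by
    intro n
    have h0 := (hXn n).mul_mul_conjTranspose_same Q
    rwa [hQh.eq] at h0
  have htq0 : ∀ n, 0 ≤ tq n := fun n => Scratch.trace_re_nonneg (hQpow n)
  have hanti : ∀ n, tq (n + 1) ≤ tq n := by
    intro n
    have h0 : (Φ ^ (n + 1)) (1 : Mat d) = Φ ((Φ ^ n) (1 : Mat d)) := by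
      rw [pow_succ']
      rfl
    rw [htqdef]
    simp only
    rw [h0]
    exact key_step _ (hXn n)
  have hmonot : ∀ m n : ℕ, m ≤ n → tq n ≤ tq m :=
    fun m n h => antitone_nat_of_succ_le hanti h
  -- Cesàro convergence of tq to 0
  set F : Mat d → ℝ := fun M => (Q * M * Q).trace.re with hFdef
  have hFcont : Continuous F := by
    apply Complex.continuous_re.comp
    exact ((continuous_const.matrix_mul continuous_id).matrix_mul continuous_const).matrix_trace
  have hFB : F B = 0 := by
    rw [hFdef]
    simp only
    rw [hQB, Matrix.zero_mul, Matrix.trace_zero]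
    rfl
  have hcesF : Filter.Tendsto (fun N => F (s N)) Filter.atTop (nhds 0) := by
    rw [← hFB]
    exact (hFcont.tendsto B).comp hs
  have hFs : ∀ N : ℕ, 1 ≤ N → tq N ≤ F (s N) := by
    intro N hN
    have hvalue : F (s N) = (N : ℝ)⁻¹ * ∑ n ∈ Finset.Icc 1 N, tq n := by
      rw [hFdef, hsdef]
      simp only
      have e1 : Q * ((N : ℂ)⁻¹ • ∑ n ∈ Finset.Icc 1 N, (Φ ^ n) (1 : Mat d)) * Q
          = (N : ℂ)⁻¹ • (Q * (∑ n ∈ Finset.Icc 1 N, (Φ ^ n) (1 : Mat d)) * Q) := by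
        rw [Matrix.mul_smul, Matrix.smul_mul]
      rw [e1, Matrix.trace_smul, smul_eq_mul]
      have hcast : ((N : ℂ))⁻¹ = (((N : ℝ)⁻¹ : ℝ) : ℂ) := by push_cast; ring
      rw [hcast, Complex.re_ofReal_mul]
      congr 1
      rw [Finset.mul_sum, Finset.sum_mul, Matrix.trace_sum, Complex.re_sum]
    rw [hvalue]
    have hsum_ge : (N : ℝ) * tq N ≤ ∑ n ∈ Finset.Icc 1 N, tq n := by
      have h0 : ∀ n ∈ Finset.Icc 1 N, tq N ≤ tq n := by
        intro n hn
        rw [Finset.mem_Icc] at hn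
        exact hmonot n N hn.2
      have h1 := Finset.card_nsmul_le_sum (Finset.Icc 1 N) tq (tq N) h0
      rw [Nat.card_Icc] at h1
      simpa [nsmul_eq_mul] using h1
    have hNpos : (0:ℝ) < (N : ℝ) := by exact_mod_cast hN
    calc tq N = (N : ℝ)⁻¹ * ((N : ℝ) * tq N) := by field_simp
      _ ≤ (N : ℝ)⁻¹ * ∑ n ∈ Finset.Icc 1 N, tq n :=
          mul_le_mul_of_nonneg_left hsum_ge (by positivity)
  have htq_to0 : Filter.Tendsto tq Filter.atTop (nhds 0) := by
    apply tendsto_of_tendsto_of_tendsto_of_le_of_le' tendsto_const_nhds hcesF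
    · exact Filter.Eventually.of_forall htq0
    · exact Filter.eventually_atTop.mpr ⟨1, hFs⟩
  have hFA : F A = 0 := by
    have h1 : Filter.Tendsto (fun i => F ((Φ ^ nn i) (1 : Mat d))) Filter.atTop (nhds (F A)) :=
      (hFcont.tendsto A).comp (hlimP 1)
    have h2 : Filter.Tendsto (fun i => tq (nn i)) Filter.atTop (nhds 0) :=
      htq_to0.comp hmono.tendsto_atTop
    exact tendsto_nhds_unique h1 h2
  have hQAQpsd : (Q * A * Q).PosSemidef := by
    have h0 := hApsd.mul_mul_conjTranspose_same Q
    rwa [hQh.eq] at h0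
  have hQAQ : Q * A * Q = 0 := by
    apply Scratch.psd_trace_eq_zero hQAQpsd
    have hre0 : (Q * A * Q).trace.re = 0 := hFA
    rw [Scratch.nonneg_eq_re (Scratch.psd_trace_nonneg hQAQpsd), hre0, Complex.ofReal_zero]
  have hAQ : A * Q = 0 := by
    apply Scratch.mat_eq_zero_of_forall_mulVec
    intro v
    rw [← Matrix.mulVec_mulVec]
    apply (hApsd.dotProduct_mulVec_zero_iff _).mp
    rw [Scratch.biconj, hQh.eq, hQAQ, Matrix.zero_mulVec, dotProduct_zero]
  have hQA : Q * A = 0 := by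
    have h0 : (A * Q)ᴴ = Qᴴ * Aᴴ := Matrix.conjTranspose_mul A Q
    rw [hAQ, hQh.eq, hApsd.1.eq] at h0
    rw [← h0, Matrix.conjTranspose_zero]
  -- direction 1 : ker A ⊆ ker B
  have hdir1 : ∀ v, A *ᵥ v = 0 → B *ᵥ v = 0 := by
    intro v hv
    have hc1B := Scratch.psd_le_trace_one hBpsd
    have hi : ∀ i : ℕ, (((B.trace.re : ℝ) : ℂ) • ((Φ ^ nn i) (1 : Mat d)) - B).PosSemidef := by
      intro i
      have h0 := Scratch.pos_pow hPos (nn i) _ hc1B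
      rwa [map_sub, _root_.map_smul, hΦpowB] at h0
    have hlim2 : Filter.Tendsto (fun i => ((B.trace.re : ℝ) : ℂ) • ((Φ ^ nn i) (1 : Mat d)) - B)
        Filter.atTop (nhds (((B.trace.re : ℝ) : ℂ) • A - B)) :=
      ((hlimP 1).const_smul _).sub_const B
    have hAB : (((B.trace.re : ℝ) : ℂ) • A - B).PosSemidef := Scratch.psd_of_tendsto hlim2 hi
    have h0 := hAB.dotProduct_mulVec_nonneg v
    rw [Matrix.sub_mulVec, dotProduct_sub, Matrix.smul_mulVec, hv, smul_zero,
      dotProduct_zero, zero_sub] at h0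
    have h1 := hBpsd.dotProduct_mulVec_nonneg v
    have h2 : star v ⬝ᵥ B *ᵥ v = 0 := le_antisymm (by simpa using neg_nonneg.mp h0) h1
    exact (hBpsd.dotProduct_mulVec_zero_iff v).mp h2
  have hkerA : ∀ v, A *ᵥ v = 0 → Q *ᵥ v = v := fun v hv => hker v (hdir1 v hv)
  rw [Scratch.range_eq_ker_proj hQA hAQ hkerA, Scratch.range_eq_ker_proj hQB hBQ hker]
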